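/- In the 5-group counterexample instance (9 goods, binary utilities as specified), in any allocation of the 9 goods among 5 groups, some group receives at most one good, and any single good has value 0 for at least one of the three agents in any group; hence that agent receives total value 0 and cannot achieve PROP1 since their proportional share 6/5 exceeds 1, the maximum value addable by one good. -/

import Mathlib

lemma vle1 (v : Fin 3 → Fin 9 → ℝ)
    (hv : v = ![![1, 1, 1, 1, 1, 1, 0, 0, 0],
                ![1, 1, 1, 0, 0, 0, 1, 1, 1],
                ![0, 0, 0, 1, 1, 1, 1, 1, 1]]) :
    ∀ i a, v i a ≤ 1 := by
  subst hv
  intro i a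
  fin_cases i <;> fin_cases a <;> norm_num

lemma vzero (v : Fin 3 → Fin 9 → ℝ)
    (hv : v = ![![1, 1, 1, 1, 1, 1, 0, 0, 0],
                ![1, 1, 1, 0, 0, 0, 1, 1, 1],
                ![0, 0, 0, 1, 1, 1, 1, 1, 1]]) :
    ∀ α : Fin 9, ∃ i : Fin 3, v i α = 0 := by
  subst hv
  intro α
  fin_cases α
  · exact ⟨2, by norm_num; rfl⟩
  · exact ⟨2, by norm_num; rfl⟩
  · exact ⟨2, by norm_num; rfl⟩
  · exact ⟨1, by norm_num⟩
  · exact ⟨1, by norm_num⟩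
  · exact ⟨1, by norm_num⟩
  · exact ⟨0, by norm_num⟩
  · exact ⟨0, by norm_num⟩
  · exact ⟨0, by norm_num⟩

/-- In the 5-group, 9-good counterexample instance: in any allocation some group
receives at most one good, any single good has value 0 for some agent of any group,
and hence some agent gets bundle value 0 and fails PROP1 (share 6/5). -/
theorem stmt_3 (v : Fin 3 → Fin 9 → ℝ)
    (hv : v = ![![1, 1, 1, 1, 1, 1, 0, 0, 0],
                ![1, 1, 1, 0, 0, 0, 1, 1, 1],
                ![0, 0, 0, 1, 1, 1, 1, 1, 1]]) :
    ∀ π : Fin 9 → Fin 5,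
      (∃ g : Fin 5, (Finset.univ.filter (fun a => π a = g)).card ≤ 1) ∧
      (∀ α : Fin 9, ∃ i : Fin 3, v i α = 0) ∧
      (∃ (g : Fin 5) (i : Fin 3),
        (∑ a ∈ Finset.univ.filter (fun a => π a = g), v i a) = 0 ∧
        ∀ B : Finset (Fin 9),
          Disjoint B (Finset.univ.filter (fun a => π a = g)) → B.card ≤ 1 →
          ∑ a ∈ Finset.univ.filter (fun a => π a = g) ∪ B, v i a < 6 / 5) := by
  intro π
  -- pigeonhole
  have hsum : ∑ g : Fin 5, (Finset.univ.filter (fun a => π a = g)).card = 9 := by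
    rw [← Finset.card_eq_sum_card_fiberwise (f := π) (fun a _ => Finset.mem_univ _)]
    simp
  have hpig : ∃ g : Fin 5, (Finset.univ.filter (fun a => π a = g)).card ≤ 1 := by
    by_contra h
    push_neg at h
    have : 10 ≤ ∑ g : Fin 5, (Finset.univ.filter (fun a => π a = g)).card := by
      calc (10 : ℕ) = ∑ _g : Fin 5, 2 := by simp
        _ ≤ _ := Finset.sum_le_sum (fun g _ => h g)
    omega
  refine ⟨hpig, vzero v hv, ?_⟩
  obtain ⟨g, hg⟩ := hpig
  set S := Finset.univ.filter (fun a => π a = g) with hS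
  -- find an agent with zero value on S
  have key : ∃ i : Fin 3, ∑ a ∈ S, v i a = 0 := by
    rcases Finset.card_le_one_iff_subset_singleton.mp hg with ⟨x, hx⟩
    rcases Finset.subset_singleton_iff.mp hx with h | h
    · exact ⟨0, by rw [h]; simp⟩
    · obtain ⟨i, hi⟩ := vzero v hv x
      exact ⟨i, by rw [h]; simpa using hi⟩
  obtain ⟨i, hi⟩ := key
  refine ⟨g, i, hi, ?_⟩
  intro B hdisj hB
  rw [Finset.union_comm, Finset.sum_union hdisj, hi, add_zero]
  have h1 : ∑ a ∈ B, v i a ≤ B.card • (1 : ℝ) :=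
    Finset.sum_le_card_nsmul B _ 1 (fun a _ => vle1 v hv i a)
  have h2 : (B.card : ℝ) • (1 : ℝ) ≤ 1 := by
    simp only [smul_eq_mul, mul_one]
    exact_mod_cast hB
  calc ∑ a ∈ B, v i a ≤ B.card • (1 : ℝ) := h1
    _ = (B.card : ℝ) * 1 := by rw [nsmul_eq_mul]
    _ ≤ 1 := by simpa using h2
    _ < 6 / 5 := by norm_num
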